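/- (Necessary global optimality condition for quadratic minimization over the sphere.) Let M be a real symmetric n×n matrix and u ∈ ℝⁿ. If x* with ‖x*‖₂ = 1 is a global minimizer of x ↦ (1/2) xᵀMx + ⟨u,x⟩ over the unit sphere, then there exists ν ∈ ℝ such that M x* + u = ν x* and M − νI is positive semidefinite. -/

import Mathlib

open scoped RealInnerProductSpace
open Matrix Filter Topology


lemma aux_lin (a b c d : ℝ) (h : ∀ t : ℝ, 0 ≤ a*t + b*t^2 + c*t^3 + d*t^4) : a = 0 := by
  have hcont : Tendsto (fun t : ℝ => a + b*t + c*t^2 + d*t^3) (𝓝 0) (𝓝 a) := by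
    have : Continuous (fun t : ℝ => a + b*t + c*t^2 + d*t^3) := by continuity
    simpa using this.tendsto 0
  have h1 : 0 ≤ a := by
    have ht : Tendsto (fun t : ℝ => a + b*t + c*t^2 + d*t^3) (𝓝[>] (0:ℝ)) (𝓝 a) :=
      hcont.mono_left nhdsWithin_le_nhds
    refine ge_of_tendsto ht ?_
    filter_upwards [self_mem_nhdsWithin] with t (ht : 0 < t)
    nlinarith [h t]
  have h2 : a ≤ 0 := by
    have ht : Tendsto (fun t : ℝ => a + b*t + c*t^2 + d*t^3) (𝓝[<] (0:ℝ)) (𝓝 a) :=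
      hcont.mono_left nhdsWithin_le_nhds
    refine le_of_tendsto ht ?_
    filter_upwards [self_mem_nhdsWithin] with t (ht : t < 0)
    nlinarith [h t]
  linarith

lemma aux_quad (a b c e0 : ℝ) (h : ∀ ε : ℝ, ε ≠ e0 → 0 ≤ c + b*ε + a*ε^2) : 0 ≤ c := by
  rcases eq_or_ne e0 0 with rfl | he
  · have hcont : Tendsto (fun ε : ℝ => c + b*ε + a*ε^2) (𝓝 0) (𝓝 c) := by
      have : Continuous (fun ε : ℝ => c + b*ε + a*ε^2) := by continuity
      simpa using this.tendsto 0
    have ht : Tendsto (fun ε : ℝ => c + b*ε + a*ε^2) (𝓝[≠] (0:ℝ)) (𝓝 c) :=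
      hcont.mono_left nhdsWithin_le_nhds
    refine ge_of_tendsto ht ?_
    filter_upwards [self_mem_nhdsWithin] with ε (hε : ε ≠ 0)
    exact h ε hε
  · simpa using h 0 (Ne.symm he)

set_option maxHeartbeats 1000000 in
theorem necessary_global_optimality (n : ℕ)
    (M : Matrix (Fin n) (Fin n) ℝ) (hM : Mᵀ = M)
    (u xstar : EuclideanSpace ℝ (Fin n)) (hnorm : ‖xstar‖ = 1)
    (hmin : ∀ x : EuclideanSpace ℝ (Fin n), ‖x‖ = 1 →
      (1 / 2) * ⟪xstar, Matrix.toEuclideanLin M xstar⟫ + ⟪u, xstar⟫ ≤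
        (1 / 2) * ⟪x, Matrix.toEuclideanLin M x⟫ + ⟪u, x⟫) :
    ∃ ν : ℝ, Matrix.toEuclideanLin M xstar + u = ν • xstar ∧
      (M - ν • (1 : Matrix (Fin n) (Fin n) ℝ)).PosSemidef := by
  obtain ⟨A, hAdef⟩ : ∃ A' : EuclideanSpace ℝ (Fin n) →ₗ[ℝ] EuclideanSpace ℝ (Fin n),
      Matrix.toEuclideanLin M = A' := ⟨_, rfl⟩
  rw [hAdef] at hmin ⊢
  have hHerm : M.IsHermitian := by
    rw [Matrix.IsHermitian, Matrix.conjTranspose_eq_transpose_of_trivial, hM]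
  have hsym : ∀ x y : EuclideanSpace ℝ (Fin n), ⟪A x, y⟫ = ⟪x, A y⟫ := by
    rw [← hAdef]
    exact Matrix.isHermitian_iff_isSymmetric.mp hHerm
  have hx2 : ⟪xstar, xstar⟫ = 1 := by
    rw [real_inner_self_eq_norm_sq, hnorm]; norm_num
  obtain ⟨ν, hν⟩ : ∃ r : ℝ, ⟪xstar, A xstar⟫ + ⟪u, xstar⟫ = r := ⟨_, rfl⟩
  -- first order condition
  have hg : A xstar + u = ν • xstar := by
    by_contra hne
    have hgne0 : A xstar + u - ν • xstar ≠ 0 := sub_ne_zero.mpr hne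
    obtain ⟨g, hgdef⟩ : ∃ w : EuclideanSpace ℝ (Fin n), A xstar + u - ν • xstar = w := ⟨_, rfl⟩
    rw [hgdef] at hgne0
    have hgx : ⟪g, xstar⟫ = 0 := by
      rw [← hgdef, inner_sub_left, inner_add_left, real_inner_smul_left, hx2, mul_one]
      linear_combination real_inner_comm xstar (A xstar) + hν
    have hgnorm : (0:ℝ) < ‖g‖ := norm_pos_iff.mpr hgne0
    obtain ⟨v, hvdef⟩ : ∃ w : EuclideanSpace ℝ (Fin n), ‖g‖⁻¹ • g = w := ⟨_, rfl⟩
    have hv : ‖v‖ = 1 := by rw [← hvdef]; exact norm_smul_inv_norm hgne0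
    have hvv : ⟪v, v⟫ = 1 := by rw [real_inner_self_eq_norm_sq, hv]; norm_num
    have hvx : ⟪v, xstar⟫ = 0 := by
      rw [← hvdef, real_inner_smul_left, hgx, mul_zero]
    have hxv : ⟪xstar, v⟫ = 0 := by rw [real_inner_comm]; exact hvx
    have hvg : ⟪v, g⟫ = ‖g‖ := by
      rw [← hvdef, real_inner_smul_left, real_inner_self_eq_norm_sq]
      field_simp
    obtain ⟨a, ha⟩ : ∃ r : ℝ, ⟪xstar, A xstar⟫ = r := ⟨_, rfl⟩
    obtain ⟨b, hb⟩ : ∃ r : ℝ, ⟪v, A xstar⟫ = r := ⟨_, rfl⟩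
    obtain ⟨c, hc⟩ : ∃ r : ℝ, ⟪v, A v⟫ = r := ⟨_, rfl⟩
    obtain ⟨p, hp⟩ : ∃ r : ℝ, ⟪u, xstar⟫ = r := ⟨_, rfl⟩
    obtain ⟨q, hq⟩ : ∃ r : ℝ, ⟪u, v⟫ = r := ⟨_, rfl⟩
    have hb' : ⟪xstar, A v⟫ = b := by
      rw [real_inner_comm (A v) xstar, hsym v xstar, hb]
    have hbq : b + q = ‖g‖ := by
      have h0 : ⟪v, g⟫ = b + q - ν * ⟪v, xstar⟫ := by
        rw [← hgdef, inner_sub_right, inner_add_right, real_inner_smul_right]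
        linear_combination hb + hq + real_inner_comm u v
      rw [hvg, hvx] at h0
      linarith
    have hP : ∀ t : ℝ, 0 ≤ (4*(b+q))*t + (4*c-4*a-4*p)*t^2 + (4*q-4*b)*t^3 + (-4*p)*t^4 := by
      intro t
      have hs : (0:ℝ) < 1 + t^2 := by positivity
      obtain ⟨α, hα⟩ : ∃ r : ℝ, (1-t^2)/(1+t^2) = r := ⟨_, rfl⟩
      obtain ⟨β, hβ⟩ : ∃ r : ℝ, 2*t/(1+t^2) = r := ⟨_, rfl⟩
      have hαβ : α^2 + β^2 = 1 := by
        rw [← hα, ← hβ]; field_simp; ring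
      have hxx : ⟪α • xstar + β • v, α • xstar + β • v⟫ = 1 := by
        simp only [inner_add_left, inner_add_right, real_inner_smul_left,
          real_inner_smul_right, hx2, hvv, hvx, hxv]
        linear_combination hαβ
      have hxnorm : ‖α • xstar + β • v‖ = 1 := by
        have h1 : ‖α • xstar + β • v‖^2 = 1 := by rw [← real_inner_self_eq_norm_sq, hxx]
        nlinarith [norm_nonneg (α • xstar + β • v)]
      have h1 := hmin (α • xstar + β • v) hxnorm
      have hxAx : ⟪α • xstar + β • v, A (α • xstar + β • v)⟫
          = α^2*a + 2*α*β*b + β^2*c := by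
        simp only [_root_.map_add, _root_.map_smul, inner_add_left, inner_add_right,
          real_inner_smul_left, real_inner_smul_right]
        linear_combination α^2*ha + α*β*hb' + α*β*hb + β^2*hc
      have hux : ⟪u, α • xstar + β • v⟫ = α*p + β*q := by
        simp only [inner_add_right, real_inner_smul_right]
        linear_combination α*hp + β*hq
      rw [hxAx, hux, ha, hp] at h1
      have h2 : 0 ≤ (1/2)*(α^2*a + 2*α*β*b + β^2*c) + (α*p + β*q)
          - ((1/2)*a + p) := by linarith
      have keyid : (4*(b+q))*t + (4*c-4*a-4*p)*t^2 + (4*q-4*b)*t^3 + (-4*p)*t^4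
          = ((1/2)*(α^2*a + 2*α*β*b + β^2*c) + (α*p + β*q) - ((1/2)*a + p))
            * (2*(1+t^2)^2) := by
        rw [← hα, ← hβ]; field_simp; ring
      rw [keyid]
      exact mul_nonneg h2 (by positivity)
    have hz0 := aux_lin (4*(b+q)) (4*c-4*a-4*p) (4*q-4*b) (-4*p) hP
    rw [hbq] at hz0
    linarith
  -- PSD condition
  have key : ∀ z : EuclideanSpace ℝ (Fin n), 0 ≤ ⟪z, A z⟫ - ν * ⟪z, z⟫ := by
    have step1 : ∀ z : EuclideanSpace ℝ (Fin n), ⟪z, xstar⟫ ≠ 0 →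
        0 ≤ ⟪z, A z⟫ - ν * ⟪z, z⟫ := by
      intro z hz
      have hzne : z ≠ 0 := fun h => hz (by simp [h])
      obtain ⟨C, hC⟩ : ∃ r : ℝ, ⟪z, xstar⟫ = r := ⟨_, rfl⟩
      obtain ⟨Z, hZ⟩ : ∃ r : ℝ, ⟪z, z⟫ = r := ⟨_, rfl⟩
      rw [hC] at hz
      have hZpos : 0 < Z := by
        rw [← hZ, real_inner_self_eq_norm_sq]
        have : 0 < ‖z‖ := norm_pos_iff.mpr hzne
        nlinarith
      obtain ⟨t, ht⟩ : ∃ r : ℝ, -2*C/Z = r := ⟨_, rfl⟩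
      have htne : t ≠ 0 := by
        rw [← ht]
        exact div_ne_zero (by simpa using hz) (ne_of_gt hZpos)
      have hC' : ⟪xstar, z⟫ = C := by rw [real_inner_comm]; exact hC
      have hxx : ⟪xstar + t • z, xstar + t • z⟫ = 1 := by
        simp only [inner_add_left, inner_add_right, real_inner_smul_left,
          real_inner_smul_right, hx2, hC, hC', hZ]
        rw [← ht]
        field_simp
        ring
      have hxnorm : ‖xstar + t • z‖ = 1 := by
        have h1 : ‖xstar + t • z‖^2 = 1 := by rw [← real_inner_self_eq_norm_sq, hxx]
        nlinarith [norm_nonneg (xstar + t • z)]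
      have h1 := hmin (xstar + t • z) hxnorm
      obtain ⟨a, ha⟩ : ∃ r : ℝ, ⟪xstar, A xstar⟫ = r := ⟨_, rfl⟩
      obtain ⟨p, hp⟩ : ∃ r : ℝ, ⟪u, xstar⟫ = r := ⟨_, rfl⟩
      obtain ⟨q1, hq1⟩ : ∃ r : ℝ, ⟪z, A z⟫ = r := ⟨_, rfl⟩
      obtain ⟨q2, hq2⟩ : ∃ r : ℝ, ⟪z, A xstar⟫ = r := ⟨_, rfl⟩
      have hq2' : ⟪xstar, A z⟫ = q2 := by
        rw [real_inner_comm (A z) xstar, hsym z xstar, hq2]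
      have huz : ⟪u, z⟫ = ν * C - q2 := by
        have hu : u = ν • xstar - A xstar := by rw [← hg]; abel
        rw [hu, inner_sub_left, real_inner_smul_left, hsym xstar z, hq2', hC']
      have hxAx : ⟪xstar + t • z, A (xstar + t • z)⟫ = a + 2*t*q2 + t^2*q1 := by
        simp only [_root_.map_add, _root_.map_smul, inner_add_left, inner_add_right,
          real_inner_smul_left, real_inner_smul_right]
        linear_combination ha + t*hq2' + t*hq2 + t^2*hq1
      have hux : ⟪u, xstar + t • z⟫ = p + t*(ν*C - q2) := by
        simp only [inner_add_right, real_inner_smul_right]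
        linear_combination hp + t*huz
      rw [hxAx, hux, ha, hp] at h1
      have htC : t * C = -(1/2) * t^2 * Z := by
        rw [← ht]; field_simp
      have ht2 : 0 < t^2 := pow_two_pos_of_ne_zero htne
      have htC' : ν*(t*C) = ν*(-(1/2)*t^2*Z) := by rw [htC]
      have h3 : 0 ≤ (1/2) * t^2 * (q1 - ν * Z) := by nlinarith [h1, htC']
      rw [hq1, hZ]
      nlinarith [h3, ht2]
    intro z
    obtain ⟨C, hC⟩ : ∃ r : ℝ, ⟪z, xstar⟫ = r := ⟨_, rfl⟩
    refine aux_quad (⟪xstar, A xstar⟫ - ν) (2*(⟪z, A xstar⟫ - ν*C))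
      (⟪z, A z⟫ - ν * ⟪z, z⟫) (-C) ?_
    intro ε hε
    have hzε : ⟪z + ε • xstar, xstar⟫ ≠ 0 := by
      rw [inner_add_left, real_inner_smul_left, hx2, mul_one, hC]
      intro hcon
      exact hε (by linarith)
    have h1 := step1 (z + ε • xstar) hzε
    have hq2' : ⟪xstar, A z⟫ = ⟪z, A xstar⟫ := by
      rw [real_inner_comm (A z) xstar, hsym z xstar]
    have hexp : ⟪z + ε • xstar, A (z + ε • xstar)⟫ - ν * ⟪z + ε • xstar, z + ε • xstar⟫
        = (⟪z, A z⟫ - ν * ⟪z, z⟫) + (2*(⟪z, A xstar⟫ - ν*C))*ε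
          + (⟪xstar, A xstar⟫ - ν)*ε^2 := by
      simp only [_root_.map_add, _root_.map_smul, inner_add_left, inner_add_right,
        real_inner_smul_left, real_inner_smul_right, hx2]
      linear_combination ε*hq2' - 2*ν*ε*hC - ν*ε*real_inner_comm z xstar
    rw [hexp] at h1
    linarith
  refine ⟨ν, hg, ?_⟩
  refine Matrix.PosSemidef.of_dotProduct_mulVec_nonneg ?_ ?_
  · rw [Matrix.IsHermitian, Matrix.conjTranspose_eq_transpose_of_trivial,
      Matrix.transpose_sub, hM, Matrix.transpose_smul, Matrix.transpose_one]
  · intro x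
    have h1 := key (WithLp.toLp 2 x)
    rw [← hAdef, Matrix.toEuclideanLin_apply_piLp_toLp] at h1
    rw [EuclideanSpace.inner_toLp_toLp, EuclideanSpace.inner_toLp_toLp] at h1
    simp only [star_trivial] at h1 ⊢
    rw [Matrix.sub_mulVec, Matrix.smul_mulVec, Matrix.one_mulVec,
      dotProduct_sub, dotProduct_smul]
    simpa [dotProduct_comm (M *ᵥ x) x] using h1
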